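/- Quasi-periodicity of the discrete-time SAFT: if c : ℤ → ℂ is absolutely summable, then for every ω ∈ ℝ, Ĉ_A(ω + Δ) = Ĉ_A(ω) · exp((Complex.I/(2b)) · (d·Δ² + 2·d·ω·Δ + Ω·Δ)); in particular |Ĉ_A(ω + Δ)| = |Ĉ_A(ω)|, i.e. the modulus of the discrete-time SAFT is periodic with period Δ = 2πb. -/

import Mathlib

open MeasureTheory Real

/-- The discrete-time SAFT of a sequence `c : ℤ → ℂ`, with `Ω = 2*(b*q - d*p)`. -/
noncomputable def dtSAFT (a b d p q : ℝ) (c : ℤ → ℂ) (ω : ℝ) : ℂ :=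
  (Real.sqrt (2 * π * b) : ℂ)⁻¹ *
    ∑' k : ℤ, c k * Complex.exp (Complex.I / (2 * b) *
      ((a * (k : ℝ) ^ 2 + d * ω ^ 2 - 2 * (k : ℝ) * ω + 2 * (b * q - d * p) * ω
        + 2 * p * (k : ℝ) : ℝ) : ℂ))

/-- Quasi-periodicity of the discrete-time SAFT: the modulus is `Δ = 2πb`-periodic. -/
theorem dtSAFT_quasi_periodic (a b c d p q : ℝ) (hb : 0 < b) (habcd : a * d - b * c = 1)
    (cseq : ℤ → ℂ) (hc : Summable fun k : ℤ => ‖cseq k‖) :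
    ∀ ω : ℝ,
      dtSAFT a b d p q cseq (ω + 2 * π * b) =
        dtSAFT a b d p q cseq ω * Complex.exp (Complex.I / (2 * b) *
          ((d * (2 * π * b) ^ 2 + 2 * d * ω * (2 * π * b)
            + 2 * (b * q - d * p) * (2 * π * b) : ℝ) : ℂ)) ∧
      ‖dtSAFT a b d p q cseq (ω + 2 * π * b)‖ = ‖dtSAFT a b d p q cseq ω‖ := by
  intro ω
  have hb' : (b : ℂ) ≠ 0 := by exact_mod_cast hb.ne'
  set E : ℂ := Complex.exp (Complex.I / (2 * b) *
          ((d * (2 * π * b) ^ 2 + 2 * d * ω * (2 * π * b)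
            + 2 * (b * q - d * p) * (2 * π * b) : ℝ) : ℂ)) with hE
  have key : dtSAFT a b d p q cseq (ω + 2 * π * b) = dtSAFT a b d p q cseq ω * E := by
    unfold dtSAFT
    rw [mul_assoc _ _ E, ← tsum_mul_right]
    congr 1
    apply tsum_congr
    intro k
    rw [mul_assoc _ _ E]
    congr 1
    rw [hE, ← Complex.exp_add]
    have h1 : Complex.exp ((k : ℤ) * (2 * π * Complex.I)) = 1 :=
      Complex.exp_int_mul_two_pi_mul_I k
    rw [← mul_one (Complex.exp _), ← h1, ← Complex.exp_add]
    congr 1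
    push_cast
    field_simp [hb']
    ring
  refine ⟨key, ?_⟩
  rw [key, norm_mul]
  have : ‖E‖ = 1 := by
    rw [hE]
    have h2 : Complex.I / (2 * (b:ℂ)) *
        ((d * (2 * π * b) ^ 2 + 2 * d * ω * (2 * π * b)
          + 2 * (b * q - d * p) * (2 * π * b) : ℝ) : ℂ) =
        (((d * (2 * π * b) ^ 2 + 2 * d * ω * (2 * π * b)
          + 2 * (b * q - d * p) * (2 * π * b)) / (2 * b) : ℝ) : ℂ) * Complex.I := by
      push_cast
      field_simp
    rw [h2, Complex.norm_exp_ofReal_mul_I]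
  rw [this, mul_one]
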